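/- Let d ≥ 1, p ∈ (1/2, 1) and q = 1 − p. Let P be the d×d matrix with P_{i,i+1} = p for 1 ≤ i ≤ d−1, P_{i,i−1} = q for 2 ≤ i ≤ d, and all other entries 0, and set R = I − Pᵀ. Then R is invertible and its inverse is given explicitly by: for 1 ≤ i ≤ j ≤ d, (R⁻¹)_{ij} = ((q/p)^{j−i}/(p−q)) · (1 − (q/p)^i)(1 − (q/p)^{d+1−j}) / (1 − (q/p)^{d+1}); and for 1 ≤ j < i ≤ d, (R⁻¹)_{ij} = ((p/q)^{i−j}/(p−q)) · ((p/q)^j − 1)((p/q)^{d+1−i} − 1) / ((p/q)^{d+1} − 1). -/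

import Mathlib

set_option linter.unusedSectionVars false
set_option maxHeartbeats 1000000

open Matrix

/-- The candidate inverse matrix (as a function of 0-based natural indices). -/
noncomputable def Bf (d : ℕ) (p q : ℝ) (i j : ℕ) : ℝ :=
  if i ≤ j then
    ((q/p) ^ (j - i) / (p - q)) * ((1 - (q/p) ^ (i + 1)) * (1 - (q/p) ^ (d - j))) /
      (1 - (q/p) ^ (d + 1))
  else
    ((p/q) ^ (i - j) / (p - q)) * (((p/q) ^ (j + 1) - 1) * ((p/q) ^ (d - i) - 1)) /
      ((p/q) ^ (d + 1) - 1)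

/-- Numerator form of the candidate inverse. -/
noncomputable def gf (d : ℕ) (r : ℝ) (i j : ℕ) : ℝ :=
  if i ≤ j then r ^ (j - i) * ((1 - r ^ (i + 1)) * (1 - r ^ (d - j)))
  else (1 - r ^ (j + 1)) * (1 - r ^ (d - i))

lemma gf_upper (d : ℕ) (r : ℝ) (i j : ℕ) (h : i ≤ j) :
    gf d r i j = r ^ (j - i) * ((1 - r ^ (i + 1)) * (1 - r ^ (d - j))) := by
  rw [gf, if_pos h]

lemma gf_lower (d : ℕ) (r : ℝ) (i j : ℕ) (h : j ≤ i) :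
    gf d r i j = (1 - r ^ (j + 1)) * (1 - r ^ (d - i)) := by
  rcases lt_or_eq_of_le h with h' | h'
  · rw [gf, if_neg (by omega)]
  · subst h'; rw [gf, if_pos le_rfl]; simp

section

variable {p q : ℝ} (hp : 1/2 < p) (hp1 : p < 1) (hq : q = 1 - p)

include hp hp1 hq

lemma q_pos : 0 < q := by subst hq; linarith
lemma qp_lt_one : q / p < 1 := by
  rw [div_lt_one (by linarith)]; subst hq; linarith
lemma qp_pos : 0 < q / p := div_pos (q_pos hp hp1 hq) (by linarith)
lemma pq_ne : p - q ≠ 0 := by subst hq; intro h; linarith [sub_eq_zero.mp h]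
lemma one_sub_r_pow_ne (n : ℕ) (hn : n ≠ 0) : 1 - (q/p) ^ n ≠ 0 := by
  have := pow_lt_one₀ (le_of_lt (qp_pos hp hp1 hq)) (qp_lt_one hp hp1 hq) hn
  intro h; nlinarith [sub_eq_zero.mp h]

lemma Bf_eq (d i j : ℕ) (hi : i ≤ d) :
    Bf d p q i j = gf d (q/p) i j / ((p - q) * (1 - (q/p) ^ (d + 1))) := by
  have hp0 : p ≠ 0 := by linarith
  have hq0 : q ≠ 0 := ne_of_gt (q_pos hp hp1 hq)
  have hpq := pq_ne hp hp1 hq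
  have hden := one_sub_r_pow_ne hp hp1 hq (d+1) (by omega)
  by_cases h : i ≤ j
  · rw [Bf, if_pos h, gf, if_pos h, div_mul_eq_mul_div, div_div]
  · push_neg at h
    rw [Bf, if_neg (by omega), gf, if_neg (by omega)]
    have hr0 : (q/p) ≠ 0 := ne_of_gt (qp_pos hp hp1 hq)
    have hps : (p/q) = (q/p)⁻¹ := by rw [inv_div]
    have hkey : ∀ n : ℕ, (p/q) ^ n - 1 = (1 - (q/p) ^ n) / ((q/p) ^ n) := by
      intro n; rw [hps, inv_pow]; field_simp
    obtain ⟨a, ha⟩ : ∃ a, i - j = a := ⟨_, rfl⟩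
    obtain ⟨b, hb⟩ : ∃ b, j + 1 = b := ⟨_, rfl⟩
    obtain ⟨c, hc⟩ : ∃ c, d - i = c := ⟨_, rfl⟩
    have habc : d + 1 = a + (b + c) := by omega
    rw [hkey, hkey, hkey, hps, inv_pow, ha, hb, hc, habc, pow_add, pow_add]
    have hden' : 1 - (q/p) ^ a * ((q/p) ^ b * (q/p) ^ c) ≠ 0 := by
      rw [← pow_add, ← pow_add, ← habc]; exact hden
    have hxa : (q/p) ^ a ≠ 0 := pow_ne_zero _ hr0
    have hxb : (q/p) ^ b ≠ 0 := pow_ne_zero _ hr0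
    have hxc : (q/p) ^ c ≠ 0 := pow_ne_zero _ hr0
    generalize hA : (q/p) ^ a = x at hxa hden' ⊢
    generalize hB : (q/p) ^ b = y at hxb hden' ⊢
    generalize hC : (q/p) ^ c = z at hxc hden' ⊢
    field_simp

end

lemma numer (p : ℝ) (hp : 1/2 < p) (hp1 : p < 1) (d i j : ℕ) (hd : 1 ≤ d)
    (hi : i < d) (hj : j < d) :
    gf d ((1-p)/p) i j - (if 1 ≤ i then p * gf d ((1-p)/p) (i-1) j else 0)
      - (if i + 1 < d then (1-p) * gf d ((1-p)/p) (i+1) j else 0)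
      = if i = j then (p - (1-p)) * (1 - ((1-p)/p) ^ (d+1)) else 0 := by
  have hp0 : p ≠ 0 := by linarith
  rcases lt_trichotomy i j with hij | hij | hij
  · -- i < j
    rw [if_pos (show i + 1 < d by omega), if_neg (show ¬i = j by omega)]
    rw [gf_upper d _ i j (by omega), gf_upper d _ (i+1) j (by omega)]
    by_cases h1 : 1 ≤ i
    · rw [if_pos h1, gf_upper d _ (i-1) j (by omega)]
      obtain ⟨e, rfl⟩ : ∃ e, j = i + e + 1 + 1 - 1 := ⟨j - i - 1, by omega⟩
      simp only [show i + e + 1 + 1 - 1 = i + e + 1 from by omega]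
      rw [show i + e + 1 - i = e + 1 from by omega,
          show i + e + 1 - (i + 1) = e from by omega,
          show i + e + 1 - (i - 1) = e + 2 from by omega,
          show i - 1 + 1 = i from by omega]
      simp only [div_pow]; field_simp
      ring
    · obtain rfl : i = 0 := by omega
      rw [if_neg h1]
      obtain ⟨e, rfl⟩ : ∃ e, j = e + 1 := ⟨j - 1, by omega⟩
      rw [show e + 1 - 0 = e + 1 from by omega,
          show e + 1 - (0 + 1) = e from by omega]
      simp only [div_pow]; field_simp
      ring
  · -- i = j
    subst hij
    rw [if_pos rfl, gf_upper d _ i i le_rfl, Nat.sub_self]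
    by_cases h1 : 1 ≤ i <;> by_cases h2 : i + 1 < d
    · rw [if_pos h1, if_pos h2, gf_upper d _ (i-1) i (by omega),
          gf_lower d _ (i+1) i (by omega)]
      obtain ⟨c, rfl⟩ : ∃ c, d = i + c + 1 + 1 - 1 := ⟨d - i - 1, by omega⟩
      simp only [show i + c + 1 + 1 - 1 = i + c + 1 from by omega]
      rw [show i + c + 1 - i = c + 1 from by omega,
          show i - (i - 1) = 1 from by omega,
          show i - 1 + 1 = i from by omega,
          show i + c + 1 - (i + 1) = c from by omega,
          show i + c + 1 + 1 = i + c + 2 from by omega]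
      simp only [div_pow]; field_simp
      ring
    · rw [if_pos h1, if_neg h2, gf_upper d _ (i-1) i (by omega)]
      obtain rfl : d = i + 1 := by omega
      rw [show i + 1 - i = 1 from by omega,
          show i - (i - 1) = 1 from by omega,
          show i - 1 + 1 = i from by omega,
          show i + 1 + 1 = i + 2 from by omega]
      simp only [div_pow]; field_simp
      ring
    · obtain rfl : i = 0 := by omega
      rw [if_neg h1, if_pos h2, gf_lower d _ (0+1) 0 (by omega)]
      obtain ⟨c, rfl⟩ : ∃ c, d = c + 1 + 1 - 1 := ⟨d - 1, by omega⟩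
      simp only [show c + 1 + 1 - 1 = c + 1 from by omega]
      rw [show c + 1 - 0 = c + 1 from by omega,
          show c + 1 - (0 + 1) = c from by omega]
      simp only [div_pow]; field_simp
      ring
    · obtain rfl : i = 0 := by omega
      obtain rfl : d = 1 := by omega
      rw [if_neg h1, if_neg h2]
      norm_num
      field_simp
      ring
  · -- j < i
    rw [if_pos (show 1 ≤ i by omega), if_neg (show ¬i = j by omega)]
    rw [gf_lower d _ i j (by omega), gf_lower d _ (i-1) j (by omega)]
    by_cases h2 : i + 1 < d
    · rw [if_pos h2, gf_lower d _ (i+1) j (by omega)]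
      obtain ⟨c, rfl⟩ : ∃ c, d = i + c + 1 + 1 - 1 := ⟨d - i - 1, by omega⟩
      simp only [show i + c + 1 + 1 - 1 = i + c + 1 from by omega]
      rw [show i + c + 1 - i = c + 1 from by omega,
          show i + c + 1 - (i - 1) = c + 2 from by omega,
          show i + c + 1 - (i + 1) = c from by omega]
      simp only [div_pow]; field_simp
      ring
    · rw [if_neg h2]
      obtain rfl : d = i + 1 := by omega
      rw [show i + 1 - i = 1 from by omega,
          show i + 1 - (i - 1) = 2 from by omega]
      field_simp
      ring

lemma entry (d : ℕ) (hd : 1 ≤ d) (p q : ℝ) (hp : 1/2 < p) (hp1 : p < 1) (hq : q = 1 - p)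
    (i j : ℕ) (hi : i < d) (hj : j < d) :
    Bf d p q i j - (if 1 ≤ i then p * Bf d p q (i - 1) j else 0)
      - (if i + 1 < d then q * Bf d p q (i + 1) j else 0) = if i = j then 1 else 0 := by
  have hC : (p - q) * (1 - (q/p) ^ (d+1)) ≠ 0 :=
    mul_ne_zero (pq_ne hp hp1 hq) (one_sub_r_pow_ne hp hp1 hq (d+1) (by omega))
  rw [Bf_eq hp hp1 hq d i j (by omega), Bf_eq hp hp1 hq d (i-1) j (by omega),
      Bf_eq hp hp1 hq d (i+1) j (by omega)]
  have hsplit : ∀ (c : Prop) [Decidable c] (u v : ℝ),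
      (if c then u * (v / ((p - q) * (1 - (q/p) ^ (d+1)))) else 0)
        = (if c then u * v else 0) / ((p - q) * (1 - (q/p) ^ (d+1))) := by
    intro c inst u v
    split_ifs
    · rw [mul_div_assoc]
    · rw [zero_div]
  rw [hsplit, hsplit, div_sub_div_same, div_sub_div_same]
  have hnum := numer p hp hp1 d i j hd hi hj
  rw [← hq] at hnum
  rw [hnum]
  split_ifs with h
  · exact div_self hC
  · exact zero_div _

/-- Explicit inverse of the asymmetric Atlas reflection matrix `R = I - Pᵀ`.
Indices of `Fin d` are 0-based, so the paper's 1-based index `i` corresponds to `(i : ℕ) + 1`. -/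
theorem stmt1 (d : ℕ) (hd : 1 ≤ d) (p : ℝ) (hp : 1/2 < p) (hp1 : p < 1)
    (q : ℝ) (hq : q = 1 - p)
    (P : Matrix (Fin d) (Fin d) ℝ)
    (hP : ∀ i j : Fin d, P i j =
      if (j : ℕ) = (i : ℕ) + 1 then p else if (i : ℕ) = (j : ℕ) + 1 then q else 0)
    (R : Matrix (Fin d) (Fin d) ℝ) (hR : R = 1 - Pᵀ) :
    IsUnit R ∧
    (∀ i j : Fin d, (i : ℕ) ≤ (j : ℕ) →
      R⁻¹ i j = ((q/p) ^ ((j : ℕ) - (i : ℕ)) / (p - q)) *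
        ((1 - (q/p) ^ ((i : ℕ) + 1)) * (1 - (q/p) ^ (d - (j : ℕ)))) /
        (1 - (q/p) ^ (d + 1))) ∧
    (∀ i j : Fin d, (j : ℕ) < (i : ℕ) →
      R⁻¹ i j = ((p/q) ^ ((i : ℕ) - (j : ℕ)) / (p - q)) *
        (((p/q) ^ ((j : ℕ) + 1) - 1) * ((p/q) ^ (d - (i : ℕ)) - 1)) /
        ((p/q) ^ (d + 1) - 1)) := by
  set B : Matrix (Fin d) (Fin d) ℝ := fun i j => Bf d p q (i : ℕ) (j : ℕ) with hB
  have key : R * B = 1 := by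
    ext i j
    rw [Matrix.mul_apply]
    have hsplit : ∀ k : Fin d, R i k * B k j
        = (if (i : ℕ) = (k : ℕ) then B k j else 0)
          - ((if (i : ℕ) = (k : ℕ) + 1 then p * B k j else 0)
            + (if (k : ℕ) = (i : ℕ) + 1 then q * B k j else 0)) := by
      intro k
      rw [hR]
      simp only [Matrix.sub_apply, Matrix.one_apply, Matrix.transpose_apply, hP,
        Fin.ext_iff]
      split_ifs <;> first | omega | ring
    rw [Finset.sum_congr rfl (fun k _ => hsplit k), Finset.sum_sub_distrib,
      Finset.sum_add_distrib]
    have S1 : (∑ k : Fin d, if (i : ℕ) = (k : ℕ) then B k j else 0) = B i j := by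
      rw [Finset.sum_eq_single i]
      · rw [if_pos rfl]
      · intro b _ hb; rw [if_neg (fun h => hb (Fin.ext h.symm))]
      · intro h; exact absurd (Finset.mem_univ _) h
    have S2 : (∑ k : Fin d, if (i : ℕ) = (k : ℕ) + 1 then p * B k j else 0)
        = if 1 ≤ (i : ℕ) then p * Bf d p q ((i : ℕ) - 1) (j : ℕ) else 0 := by
      by_cases hi1 : 1 ≤ (i : ℕ)
      · rw [if_pos hi1, Finset.sum_eq_single (⟨(i : ℕ) - 1, by omega⟩ : Fin d)]
        · rw [if_pos (by simp; omega)]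
        · intro b _ hb
          rw [if_neg (fun h => hb (Fin.ext (by simp; omega)))]
        · intro h; exact absurd (Finset.mem_univ _) h
      · rw [if_neg hi1, Finset.sum_eq_zero]
        intro k _; rw [if_neg (by omega)]
    have S3 : (∑ k : Fin d, if (k : ℕ) = (i : ℕ) + 1 then q * B k j else 0)
        = if (i : ℕ) + 1 < d then q * Bf d p q ((i : ℕ) + 1) (j : ℕ) else 0 := by
      by_cases hi1 : (i : ℕ) + 1 < d
      · rw [if_pos hi1, Finset.sum_eq_single (⟨(i : ℕ) + 1, hi1⟩ : Fin d)]
        · rw [if_pos rfl]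
        · intro b _ hb
          rw [if_neg (fun h => hb (Fin.ext (by simpa using h)))]
        · intro h; exact absurd (Finset.mem_univ _) h
      · rw [if_neg hi1, Finset.sum_eq_zero]
        intro k _; rw [if_neg (by omega)]
    rw [S1, S2, S3, Matrix.one_apply]
    have := entry d hd p q hp hp1 hq (i : ℕ) (j : ℕ) i.isLt j.isLt
    simp only [hB, Fin.ext_iff]
    rw [sub_add_eq_sub_sub] at *
    convert this using 2
  have hInv : Invertible R := invertibleOfRightInverse R B key
  have hBinv : R⁻¹ = B := inv_eq_right_inv key
  refine ⟨isUnit_of_invertible R, ?_, ?_⟩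
  · intro i j hij
    rw [hBinv, hB]
    show Bf d p q (i : ℕ) (j : ℕ) = _
    rw [Bf, if_pos hij]
  · intro i j hij
    rw [hBinv, hB]
    show Bf d p q (i : ℕ) (j : ℕ) = _
    rw [Bf, if_neg (by omega)]
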